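/- Let G be a group and P_G a submonoid closed under conjugation. Define H = ℤ × G and P_H = (ℕ × P_G) \ {(0, g) | g ≠ 0}. Then P_H is a submonoid of H closed under conjugation, P_H is a reduced monoid, and the projection f : H → G, f(z, g) = g, is a surjective group homomorphism with f(P_H) = P_G. -/
import Mathlib


/-- For any preordered group `(G, P)`, setting `H = ℤ × G` with cone
`P_H = (ℕ × P) \ {(0, g) | g ≠ 0}`, `P_H` is a conjugation-closed reduced submonoid of `H`
and the second projection is surjective with `f(P_H) = P`. -/
theorem stmt_7 (G : Type*) [AddGroup G] (P : AddSubmonoid G)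
    (hconj : ∀ g : G, ∀ p ∈ P, g + p - g ∈ P) :
    ∃ Q : AddSubmonoid (ℤ × G),
      (Q : Set (ℤ × G)) = {x : ℤ × G | 0 ≤ x.1 ∧ x.2 ∈ P ∧ (x.1 = 0 → x.2 = 0)} ∧
      (∀ h : ℤ × G, ∀ q ∈ Q, h + q - h ∈ Q) ∧
      (∀ x y : ℤ × G, x ∈ Q → y ∈ Q → x + y = 0 → x = 0 ∧ y = 0) ∧
      Function.Surjective (Prod.snd : ℤ × G → G) ∧
      Prod.snd '' (Q : Set (ℤ × G)) = (P : Set G) := by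
  refine ⟨{ carrier := {x : ℤ × G | 0 ≤ x.1 ∧ x.2 ∈ P ∧ (x.1 = 0 → x.2 = 0)}
            zero_mem' := ⟨le_refl 0, P.zero_mem, fun _ => rfl⟩
            add_mem' := ?_ }, rfl, ?_, ?_, ?_, ?_⟩
  · rintro ⟨a, p⟩ ⟨b, q⟩ ⟨ha, hp, hap⟩ ⟨hb, hq, hbq⟩
    dsimp only at *
    refine ⟨add_nonneg ha hb, P.add_mem hp hq, fun h => ?_⟩
    have h' : a + b = 0 := h
    have ha0 : a = 0 := by omega
    have hb0 : b = 0 := by omega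
    simp [hap ha0, hbq hb0]
  · rintro ⟨c, h⟩ ⟨a, p⟩ ⟨ha, hp, hap⟩
    dsimp only at *
    refine ⟨by simpa using ha, hconj h p hp, fun hz => ?_⟩
    have : a = 0 := by simpa using hz
    simp [hap this]
  · rintro ⟨a, p⟩ ⟨b, q⟩ ⟨ha, hp, hap⟩ ⟨hb, hq, hbq⟩ hsum
    dsimp only at *
    have h1 : a + b = 0 := congrArg Prod.fst hsum
    have h2 : p + q = 0 := congrArg Prod.snd hsum
    have ha0 : a = 0 := by omega
    have hb0 : b = 0 := by omega
    have hp0 := hap ha0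
    have hq0 := hbq hb0
    constructor <;> simp_all [Prod.ext_iff]
  · exact fun g => ⟨(0, g), rfl⟩
  · ext g
    constructor
    · rintro ⟨⟨a, p⟩, ⟨_, hp, _⟩, rfl⟩
      exact hp
    · intro hg
      exact ⟨(1, g), ⟨by norm_num, hg, by norm_num⟩, rfl⟩
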